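/- Let n ≥ 2 and let L ∈ ℝ^{n×n} be Minkowski-symmetric and null negative semi-definite. If x ∈ ℝⁿ is a nonzero null vector with ⟨Lx,x⟩ = 0, then x is an eigenvector of L, i.e., there exists λ ∈ ℝ with L x = λ x. -/

import Mathlib

open Matrix Set

noncomputable section

/-- The Minkowski inner product on `ℝⁿ`: `⟨v,w⟩ = -v₀w₀ + Σ_{j≥1} vⱼwⱼ`. -/
def mink {n : ℕ} (v w : Fin n → ℝ) : ℝ :=
  ∑ j : Fin n, (if (j : ℕ) = 0 then -(v j * w j) else v j * w j)

/-- A vector is null if its Minkowski square vanishes. -/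
def IsNull {n : ℕ} (v : Fin n → ℝ) : Prop := mink v v = 0

/-- A matrix is symmetric with respect to the Minkowski inner product. -/
def MinkSymm {n : ℕ} (L : Matrix (Fin n) (Fin n) ℝ) : Prop :=
  ∀ v w : Fin n → ℝ, mink (L.mulVec v) w = mink v (L.mulVec w)

/-- A matrix is null negative-definite: `⟨Lv,v⟩ < 0` for all nonzero null `v`. -/
def NullNegDef {n : ℕ} (L : Matrix (Fin n) (Fin n) ℝ) : Prop :=
  ∀ v : Fin n → ℝ, v ≠ 0 → IsNull v → mink (L.mulVec v) v < 0

/-- A matrix is null negative semi-definite: `⟨Lv,v⟩ ≤ 0` for all null `v`. -/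
def NullNegSemi {n : ℕ} (L : Matrix (Fin n) (Fin n) ℝ) : Prop :=
  ∀ v : Fin n → ℝ, IsNull v → mink (L.mulVec v) v ≤ 0

/-- Entrywise derivative (within a set) of a matrix-valued function of a real variable. -/
def matDerivWithin {n : ℕ} (L : ℝ → Matrix (Fin n) (Fin n) ℝ) (s : Set ℝ) (t : ℝ) :
    Matrix (Fin n) (Fin n) ℝ :=
  Matrix.of fun i j => derivWithin (fun u => L u i j) s t

lemma mink_comm {n : ℕ} (v w : Fin n → ℝ) : mink v w = mink w v := by
  unfold mink
  refine Finset.sum_congr rfl fun j _ => ?_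
  split_ifs <;> ring

lemma mink_add_left {n : ℕ} (v w u : Fin n → ℝ) :
    mink (v + w) u = mink v u + mink w u := by
  unfold mink
  rw [← Finset.sum_add_distrib]
  refine Finset.sum_congr rfl fun j _ => ?_
  simp only [Pi.add_apply]
  split_ifs <;> ring

lemma mink_smul_left {n : ℕ} (c : ℝ) (v u : Fin n → ℝ) :
    mink (c • v) u = c * mink v u := by
  unfold mink
  rw [Finset.mul_sum]
  refine Finset.sum_congr rfl fun j _ => ?_
  simp only [Pi.smul_apply, smul_eq_mul]
  split_ifs <;> ring

lemma mink_add_right {n : ℕ} (u v w : Fin n → ℝ) :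
    mink u (v + w) = mink u v + mink u w := by
  rw [mink_comm, mink_add_left, mink_comm v u, mink_comm w u]

lemma mink_smul_right {n : ℕ} (c : ℝ) (u v : Fin n → ℝ) :
    mink u (c • v) = c * mink u v := by
  rw [mink_comm, mink_smul_left, mink_comm v u]

lemma mink_sub_left {n : ℕ} (v w u : Fin n → ℝ) :
    mink (v - w) u = mink v u - mink w u := by
  have : v - w = v + (-1 : ℝ) • w := by funext j; simp; ring
  rw [this, mink_add_left, mink_smul_left]; ring

lemma mink_single {n : ℕ} (v : Fin n → ℝ) (i : Fin n) :
    mink v (Pi.single i 1) = if (i : ℕ) = 0 then -(v i) else v i := by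
  unfold mink
  rw [Finset.sum_eq_single i]
  · simp
  · intro j _ hj
    rw [Pi.single_eq_of_ne hj]
    split_ifs <;> ring
  · simp

lemma mink_nondeg {n : ℕ} (v : Fin n → ℝ) (h : ∀ w, mink v w = 0) : v = 0 := by
  funext i
  have := h (Pi.single i 1)
  rw [mink_single] at this
  by_cases hi : (i : ℕ) = 0 <;> simp_all

lemma mink_expand {n : ℕ} (P Q R A B C : Fin n → ℝ) (s r : ℝ) :
    mink (P + s • Q + r • R) (A + s • B + r • C) =
      mink P A + s * mink P B + r * mink P C + s * mink Q A + s^2 * mink Q B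
        + s * r * mink Q C + r * mink R A + r * s * mink R B + r^2 * mink R C := by
  simp only [mink_add_left, mink_add_right, mink_smul_left, mink_smul_right]
  ring

lemma poly_key (β γ δ ε : ℝ) (h : ∀ s : ℝ, β*s + γ*s^2 + δ*s^3 + ε*s^4 ≤ 0) :
    β = 0 := by
  set f : ℝ → ℝ := fun s => β*s + γ*s^2 + δ*s^3 + ε*s^4 with hf
  have hd : HasDerivAt f β 0 := by
    have h1 := (hasDerivAt_id (0:ℝ)).const_mul β
    have h2 := (hasDerivAt_pow 2 (0:ℝ)).const_mul γ
    have h3 := (hasDerivAt_pow 3 (0:ℝ)).const_mul δ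
    have h4 := (hasDerivAt_pow 4 (0:ℝ)).const_mul ε
    have := ((h1.add h2).add h3).add h4
    exact this.congr_deriv (by norm_num)
  have hmax : IsLocalMax f 0 := by
    refine Filter.Eventually.of_forall fun s => ?_
    have h0 : f 0 = 0 := by simp [hf]
    rw [h0]; exact h s
  have := hmax.deriv_eq_zero
  rwa [hd.deriv] at this

/-- for a Minkowski-symmetric, null negative semi-definite matrix `L`,
any nonzero null vector `x` with `⟨Lx,x⟩ = 0` is an eigenvector of `L`. -/
theorem stmt_1 {n : ℕ} (hn : 2 ≤ n) (L : Matrix (Fin n) (Fin n) ℝ)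
    (hsymm : MinkSymm L) (hsemi : NullNegSemi L)
    (x : Fin n → ℝ) (hx : x ≠ 0) (hnull : IsNull x)
    (hLx : mink (L.mulVec x) x = 0) :
    ∃ lam : ℝ, L.mulVec x = lam • x := by
  classical
  haveI : NeZero n := ⟨by omega⟩
  have hnull' : mink x x = 0 := hnull
  -- x 0 ≠ 0
  have hx0 : x 0 ≠ 0 := by
    intro h0
    apply hx
    have hterm : ∀ j ∈ Finset.univ, (0:ℝ) ≤
        (if (j : Fin n).1 = 0 then -(x j * x j) else x j * x j) := by
      intro j _
      split_ifs with hj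
      · have hj0 : j = 0 := Fin.ext (by simpa using hj)
        rw [hj0, h0]; simp
      · exact mul_self_nonneg _
    have hz := (Finset.sum_eq_zero_iff_of_nonneg hterm).mp hnull'
    funext j
    have := hz j (Finset.mem_univ j)
    by_cases hj : (j : ℕ) = 0
    · have hj0 : j = 0 := Fin.ext (by simpa using hj)
      rw [hj0, h0]; rfl
    · rw [if_neg hj] at this
      simpa using mul_self_eq_zero.mp this
  -- the reflected null vector z
  set z : Fin n → ℝ := fun j => if (j : ℕ) = 0 then -(x j) else x j with hzdef
  have hzz : mink z z = 0 := by
    rw [show mink z z = mink x x from ?_, hnull']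
    unfold mink
    refine Finset.sum_congr rfl fun j _ => ?_
    simp only [hzdef]
    split_ifs <;> ring
  set c : ℝ := 2 * (x 0)^2 with hcdef
  have hc : c ≠ 0 := by positivity
  have hxz : mink x z = c := by
    have h1 : mink x z = mink x x + c := by
      unfold mink
      rw [hcdef]
      have : ∀ j : Fin n, (if (j:ℕ) = 0 then -(x j * z j) else x j * z j)
          = (if (j:ℕ) = 0 then -(x j * x j) else x j * x j)
            + (if j = 0 then 2*(x 0)^2 else 0) := by
        intro j
        by_cases hj : (j:ℕ) = 0
        · have hj0 : j = 0 := Fin.ext (by simpa using hj)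
          subst hj0
          simp [hzdef, hj]
          ring
        · have hj0 : j ≠ 0 := fun h => hj (by rw [h]; simp)
          simp only [hzdef, if_neg hj, if_neg hj0]
          ring
      rw [Finset.sum_congr rfl fun j _ => this j, Finset.sum_add_distrib]
      simp
    rw [h1, hnull', zero_add]
  have hzx : mink z x = c := by rw [mink_comm, hxz]
  -- key orthogonality
  have horth : ∀ u : Fin n → ℝ, mink x u = 0 → mink z u = 0 →
      mink (L.mulVec x) u = 0 := by
    intro u hxu hzu
    set q : ℝ := mink u u with hqdef
    set k : ℝ := -(q / (2*c)) with hkdef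
    have hvnull : ∀ s : ℝ, IsNull (x + s • u + (k*s^2) • z) := by
      intro s
      unfold IsNull
      rw [mink_expand]
      rw [hnull', hxu, hzu, hxz, hzx, hzz, mink_comm u x, mink_comm u z, hxu, hzu]
      rw [← hqdef, hkdef]
      field_simp
      ring
    have hLv : ∀ s : ℝ, L.mulVec (x + s • u + (k*s^2) • z)
        = L.mulVec x + s • L.mulVec u + (k*s^2) • L.mulVec z := by
      intro s
      rw [Matrix.mulVec_add, Matrix.mulVec_add, Matrix.mulVec_smul, Matrix.mulVec_smul]
    have e1 : mink (L.mulVec u) x = mink (L.mulVec x) u := by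
      rw [hsymm u x, mink_comm]
    set β : ℝ := 2 * mink (L.mulVec x) u with hβdef
    set γ : ℝ := mink (L.mulVec u) u + k * (mink (L.mulVec x) z + mink (L.mulVec z) x) with hγdef
    set δ : ℝ := k * (mink (L.mulVec u) z + mink (L.mulVec z) u) with hδdef
    set ε : ℝ := k^2 * mink (L.mulVec z) z with hεdef
    have hpoly : ∀ s : ℝ, β*s + γ*s^2 + δ*s^3 + ε*s^4 ≤ 0 := by
      intro s
      have h1 := hsemi _ (hvnull s)
      rw [hLv s, mink_expand] at h1
      rw [hLx, e1] at h1
      calc β*s + γ*s^2 + δ*s^3 + ε*s^4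
          = 0 + s * mink (L.mulVec x) u + k*s^2 * mink (L.mulVec x) z
            + s * mink (L.mulVec x) u + s^2 * mink (L.mulVec u) u
            + s * (k*s^2) * mink (L.mulVec u) z + k*s^2 * mink (L.mulVec z) x
            + k*s^2 * s * mink (L.mulVec z) u + (k*s^2)^2 * mink (L.mulVec z) z := by
            rw [hβdef, hγdef, hδdef, hεdef]; ring
        _ ≤ 0 := h1
    have hβ0 : β = 0 := poly_key β γ δ ε hpoly
    rw [hβdef] at hβ0
    linarith
  -- conclude
  refine ⟨mink (L.mulVec x) z / c, ?_⟩
  have hmain : L.mulVec x - (mink (L.mulVec x) z / c) • x = 0 := by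
    apply mink_nondeg
    intro w
    set a : ℝ := mink z w / c with hadef
    set b : ℝ := mink x w / c with hbdef
    set u : Fin n → ℝ := w - a • x - b • z with hudef
    have hw : w = u + a • x + b • z := by
      funext j; simp [hudef]; ring
    have hxu : mink x u = 0 := by
      rw [hudef, show w - a • x - b • z = w + (-a) • x + (-b) • z from by funext j; simp; ring]
      rw [mink_add_right, mink_add_right, mink_smul_right, mink_smul_right, hnull', hxz, hbdef]
      field_simp
      ring
    have hzu : mink z u = 0 := by
      rw [hudef, show w - a • x - b • z = w + (-a) • x + (-b) • z from by funext j; simp; ring]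
      rw [mink_add_right, mink_add_right, mink_smul_right, mink_smul_right, hzz, hzx, hadef]
      field_simp
      ring
    have ho := horth u hxu hzu
    rw [mink_sub_left, mink_smul_left]
    rw [hw, mink_add_right, mink_add_right, mink_smul_right, mink_smul_right]
    rw [ho, hLx, mink_add_right, mink_add_right, mink_smul_right, mink_smul_right]
    rw [hxu, hnull', hxz]
    field_simp
    ring
  have := sub_eq_zero.mp hmain
  exact this
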